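/- Controller refinement theorem: Suppose (S₁,Σ₁) ≼_Q (S₂,Σ₂), i.e., Q is a feedback refinement relation from S₁ to S₂ and Σ₂ is an abstract specification associated with S₁, S₂, Q, Σ₁. If the controller C solves the abstract control problem (S₂,Σ₂), then the refined controller C ∘ Q solves the concrete control problem (S₁,Σ₁). -/
import Mathlib


structure Sys (Uin V X Y : Type) where
  init : Set X
  F : X → V → Set X
  H : X → Uin → Set (Y × V)

def Moore {Uin V X Y : Type} (S : Sys Uin V X Y) : Prop :=
  ∀ x u y v, (y, v) ∈ S.H x u → ∀ u', ∃ v', (y, v') ∈ S.H x u'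

/-- `S₁` is feedback composable with `S₂`. -/
def FC {V₁ X₁ Y₁ V₂ X₂ Y₂ : Type}
    (S₁ : Sys Y₂ V₁ X₁ Y₁) (S₂ : Sys Y₁ V₂ X₂ Y₂) : Prop :=
  Moore S₂ ∧
  ∀ x₁ x₂ y₁ y₂ v₁ v₂, (y₂, v₂) ∈ S₂.H x₂ y₁ → (y₁, v₁) ∈ S₁.H x₁ y₂ →
    S₂.F x₂ v₂ = ∅ → S₁.F x₁ v₁ = ∅

/-- The closed loop `S₁ × S₂`. -/
def closedLoop {V₁ X₁ Y₁ V₂ X₂ Y₂ : Type}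
    (S₁ : Sys Y₂ V₁ X₁ Y₁) (S₂ : Sys Y₁ V₂ X₂ Y₂) :
    Sys Unit (V₁ × V₂) (X₁ × X₂) (Y₁ × Y₂) where
  init := S₁.init ×ˢ S₂.init
  F := fun x v => (S₁.F x.1 v.1) ×ˢ (S₂.F x.2 v.2)
  H := fun x _ =>
    {p | (p.1.1, p.2.1) ∈ S₁.H x.1 p.1.2 ∧ (p.1.2, p.2.2) ∈ S₂.H x.2 p.1.1}

/-- `(u,v,x,y)` is a solution of `S` on `[0;T)`. -/
def Solution {Uin V X Y : Type} (S : Sys Uin V X Y) (T : ℕ∞)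
    (u : ℕ → Uin) (v : ℕ → V) (x : ℕ → X) (y : ℕ → Y) : Prop :=
  1 ≤ T ∧ x 0 ∈ S.init ∧
  (∀ t : ℕ, (t : ℕ∞) < T → (y t, v t) ∈ S.H (x t) (u t)) ∧
  (∀ t : ℕ, ((t + 1 : ℕ) : ℕ∞) < T → x (t + 1) ∈ S.F (x t) (v t))

/-- The behavior of `S` (infinitary completed trace semantics): input/output
pairs of solutions which are either infinite or end in blocking. -/
def Behavior {Uin V X Y : Type} (S : Sys Uin V X Y) :
    Set (ℕ∞ × (ℕ → Uin) × (ℕ → Y)) :=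
  {p | ∃ v x, Solution S p.1 p.2.1 v x p.2.2 ∧
    ∀ n : ℕ, p.1 = ((n + 1 : ℕ) : ℕ∞) → S.F (x n) (v n) = ∅}

/-- The simple system with transition `F`. -/
def simpleSys {X U : Type} (F : X → U → Set X) : Sys U U X X :=
  ⟨Set.univ, F, fun x u => {(x, u)}⟩

/-- The controller `C` solves the control problem `(S,Σ)` where `S` is the simple
system with transition `F`: `C` is feedback composable with `S` and the behavior
of the closed loop `C × S`, read at the terminals `(u,x)`, is contained in the
specification. -/
def Solves {X U Xc Vc : Type} (C : Sys X Vc Xc U) (F : X → U → Set X)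
    (Spec : Set (ℕ∞ × (ℕ → U) × (ℕ → X))) : Prop :=
  FC C (simpleSys F) ∧
  ∀ (T : ℕ∞) (yu : ℕ → U × X),
    (T, fun _ => (), yu) ∈ Behavior (closedLoop C (simpleSys F)) →
    (T, fun t => (yu t).1, fun t => (yu t).2) ∈ Spec

/-- The refined controller `C ∘ Q`: the quantizer `Q`, viewed as a static system,
preprocesses the state measurement fed to `C`. -/
def compQ {X₁ X₂ U Xc Vc : Type} (C : Sys X₂ Vc Xc U) (Q : X₁ → X₂ → Prop) :
    Sys X₁ Vc Xc U :=
  ⟨C.init, C.F, fun xc x₁ => {p | ∃ x₂, Q x₁ x₂ ∧ p ∈ C.H xc x₂}⟩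

/-- `Q` is a feedback refinement relation from the simple system `F₁` to the
simple system `F₂`. -/
def IsFRR {X₁ X₂ U : Type} (F₁ : X₁ → U → Set X₁) (F₂ : X₂ → U → Set X₂)
    (Q : X₁ → X₂ → Prop) : Prop :=
  (∀ x₁, ∃ x₂, Q x₁ x₂) ∧
  ∀ x₁ x₂, Q x₁ x₂ → ∀ u, (F₂ x₂ u).Nonempty →
    (F₁ x₁ u).Nonempty ∧ ∀ x₁' ∈ F₁ x₁ u, ∀ x₂', Q x₁' x₂' → x₂' ∈ F₂ x₂ u

/-- `Σ₂` is an abstract specification associated with `S₁`, `S₂`, `Q`, `Σ₁`. -/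
def AbstractSpec {X₁ X₂ U : Type} (Q : X₁ → X₂ → Prop)
    (Spec₁ : Set (ℕ∞ × (ℕ → U) × (ℕ → X₁)))
    (Spec₂ : Set (ℕ∞ × (ℕ → U) × (ℕ → X₂))) : Prop :=
  ∀ (T : ℕ∞) (u : ℕ → U) (x₂ : ℕ → X₂), (T, u, x₂) ∈ Spec₂ →
    ∀ x₁ : ℕ → X₁, (∀ t : ℕ, (t : ℕ∞) < T → Q (x₁ t) (x₂ t)) →
    (T, u, x₁) ∈ Spec₁

/-- controller refinement theorem.  If `(S₁,Σ₁) ≼_Q (S₂,Σ₂)` and the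
abstract controller `C` solves `(S₂,Σ₂)`, then the refined controller `C ∘ Q`
solves `(S₁,Σ₁)`. -/
theorem controller_refinement {X₁ X₂ U Xc Vc : Type}
    (F₁ : X₁ → U → Set X₁) (F₂ : X₂ → U → Set X₂) (Q : X₁ → X₂ → Prop)
    (C : Sys X₂ Vc Xc U) (hCH : ∀ x u, (C.H x u).Nonempty)
    (Spec₁ : Set (ℕ∞ × (ℕ → U) × (ℕ → X₁)))
    (Spec₂ : Set (ℕ∞ × (ℕ → U) × (ℕ → X₂)))
    (hQ : IsFRR F₁ F₂ Q) (hAbs : AbstractSpec Q Spec₁ Spec₂)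
    (hsolve : Solves C F₂ Spec₂) :
    Solves (compQ C Q) F₁ Spec₁ := by
  obtain ⟨hFC₂, hBeh₂⟩ := hsolve
  constructor
  · constructor
    · intro x u y v hyv u'
      simp only [simpleSys, Set.mem_singleton_iff, Prod.mk.injEq] at hyv ⊢
      exact ⟨u', hyv.1, rfl⟩
    · intro xc xp yc yp vc vp hp hc hF1
      simp only [simpleSys, Set.mem_singleton_iff, Prod.mk.injEq] at hp
      obtain ⟨hyp, hvp⟩ := hp
      rw [hyp] at hc
      rw [hvp] at hF1
      obtain ⟨x₂, hQx, hCH'⟩ := hc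
      have hF2 : F₂ x₂ yc = ∅ := by
        by_contra h
        rw [← Set.not_nonempty_iff_eq_empty] at hF1
        exact hF1 ((hQ.2 xp x₂ hQx yc (Set.nonempty_iff_ne_empty.mpr h)).1)
      exact hFC₂.2 xc x₂ yc x₂ vc yc rfl hCH' hF2
  · rintro T yu ⟨v, x, ⟨hT1, hinit, hH, hF⟩, hmax⟩
    have hHc : ∀ t : ℕ, (t : ℕ∞) < T →
        (∃ z, Q ((x t).2) z ∧ ((yu t).1, (v t).1) ∈ C.H ((x t).1) z) ∧
        (yu t).2 = (x t).2 ∧ (v t).2 = (yu t).1 := by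
      intro t ht
      obtain ⟨h1, h2⟩ := hH t ht
      simp only [simpleSys, Set.mem_singleton_iff, Prod.mk.injEq] at h2
      obtain ⟨hy2, hv2⟩ := h2
      refine ⟨?_, hy2, hv2⟩
      obtain ⟨z, hz1, hz2⟩ := h1
      rw [hy2] at hz1
      exact ⟨z, hz1, hz2⟩
    have hx2 : ∀ t : ℕ, ∃ z : X₂, Q ((x t).2) z ∧
        ((t : ℕ∞) < T → ((yu t).1, (v t).1) ∈ C.H ((x t).1) z) := by
      intro t
      by_cases ht : (t : ℕ∞) < T
      · obtain ⟨⟨z, hz1, hz2⟩, _, _⟩ := hHc t ht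
        exact ⟨z, hz1, fun _ => hz2⟩
      · obtain ⟨z, hz⟩ := hQ.1 ((x t).2)
        exact ⟨z, hz, fun h => absurd h ht⟩
    choose x₂ hQx hCx using hx2
    have hlt : ∀ t : ℕ, ((t + 1 : ℕ) : ℕ∞) < T → (t : ℕ∞) < T := fun t ht =>
      lt_of_le_of_lt (by exact_mod_cast Nat.le_succ t) ht
    have hF2ne : ∀ t : ℕ, ((t + 1 : ℕ) : ℕ∞) < T →
        (F₂ (x₂ t) ((yu t).1)).Nonempty := by
      intro t ht
      by_contra h
      rw [Set.not_nonempty_iff_eq_empty] at h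
      have hCempty : C.F ((x t).1) ((v t).1) = ∅ :=
        hFC₂.2 ((x t).1) (x₂ t) ((yu t).1) (x₂ t) ((v t).1) ((yu t).1)
          rfl (hCx t (hlt t ht)) h
      have hm := (hF t ht).1
      rw [show (compQ C Q).F = C.F from rfl, hCempty] at hm
      exact hm
    have hstep : ∀ t : ℕ, ((t + 1 : ℕ) : ℕ∞) < T →
        x₂ (t + 1) ∈ F₂ (x₂ t) ((yu t).1) := by
      intro t ht
      have h2 := (hF t ht).2
      rw [(hHc t (hlt t ht)).2.2] at h2
      exact (hQ.2 _ _ (hQx t) _ (hF2ne t ht)).2 _ h2 _ (hQx (t + 1))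
    have habs : (T, fun _ => (), fun t => ((yu t).1, x₂ t)) ∈
        Behavior (closedLoop C (simpleSys F₂)) := by
      refine ⟨fun t => ((v t).1, (yu t).1), fun t => ((x t).1, x₂ t),
        ⟨hT1, ⟨hinit.1, trivial⟩, ?_, ?_⟩, ?_⟩
      · intro t ht
        exact ⟨hCx t ht, rfl⟩
      · intro t ht
        exact ⟨(hF t ht).1, hstep t ht⟩
      · intro n hTn
        have hTn' : T = ((n + 1 : ℕ) : ℕ∞) := hTn
        have hn : (n : ℕ∞) < T := by
          rw [hTn']; exact_mod_cast Nat.lt_succ_self n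
        have hm := hmax n hTn
        rcases Set.prod_eq_empty_iff.mp hm with h | h
        · exact Set.prod_eq_empty_iff.mpr (Or.inl h)
        · refine Set.prod_eq_empty_iff.mpr (Or.inr ?_)
          rw [(hHc n hn).2.2] at h
          by_contra h2
          rw [← Set.not_nonempty_iff_eq_empty] at h
          exact h ((hQ.2 _ _ (hQx n) _ (Set.nonempty_iff_ne_empty.mpr h2)).1)
    have hspec2 := hBeh₂ T (fun t => ((yu t).1, x₂ t)) habs
    exact hAbs T _ _ hspec2 (fun t => (yu t).2) (fun t ht => by
      show Q ((yu t).2) (x₂ t)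
      rw [(hHc t ht).2.1]; exact hQx t)
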